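/- arXiv:1405.1594 — 4 statements merged into one kernel-verified Lean document; each statement's English description precedes it below -/
import Mathlib

section
/- For the function E(u) = (1/p)‖Au − b‖_p^p + λ(‖∇₁u‖₀ + ‖∇₂u‖₀) on ℝ^{dn}, with p ≥ 1 and λ > 0, the asymptotic (recession) function E_∞(u) = liminf_{u'→u, t→∞} E(tu')/t equals 0 if u ∈ ker(A), equals +∞ if u ∉ ker(A) and p > 1, and equals ‖Au‖₁ if u ∉ ker(A) and p = 1. -/
open Filter Topology

/-- Grouped ℓ⁰ semi-norm: number of grid points where the d-dimensional group is nonzero. -/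
noncomputable def l0 {n d : ℕ} (u : Fin n → Fin d → ℝ) : ℝ :=
  Set.ncard {i : Fin n | u i ≠ 0}

lemma l0_nonneg {n d : ℕ} (u : Fin n → Fin d → ℝ) : 0 ≤ l0 u := Nat.cast_nonneg _

lemma l0_smul {n d : ℕ} {t : ℝ} (ht : t ≠ 0) (u : Fin n → Fin d → ℝ) :
    l0 (t • u) = l0 u := by
  unfold l0
  congr 2
  ext i
  simp [Pi.smul_apply, smul_eq_zero, ht]

/-- The Potts-regularized functional E(u) = (1/p)‖Au − b‖_p^p + λ(‖∇₁u‖₀ + ‖∇₂u‖₀). -/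
noncomputable def pottsE {ng d m : ℕ}
    (A : (Fin ng → Fin d → ℝ) →ₗ[ℝ] (Fin m → ℝ)) (b : Fin m → ℝ)
    (D1 D2 : (Fin ng → Fin d → ℝ) →ₗ[ℝ] (Fin ng → Fin d → ℝ))
    (p lam : ℝ) (u : Fin ng → Fin d → ℝ) : ℝ :=
  (1 / p) * ∑ i, |A u i - b i| ^ p + lam * (l0 (D1 u) + l0 (D2 u))

lemma pottsE_smul {ng d m : ℕ}
    (A : (Fin ng → Fin d → ℝ) →ₗ[ℝ] (Fin m → ℝ)) (b : Fin m → ℝ)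
    (D1 D2 : (Fin ng → Fin d → ℝ) →ₗ[ℝ] (Fin ng → Fin d → ℝ))
    (p lam : ℝ) {t : ℝ} (ht : t ≠ 0) (v : Fin ng → Fin d → ℝ) :
    pottsE A b D1 D2 p lam (t • v)
      = (1 / p) * ∑ i, |t * A v i - b i| ^ p + lam * (l0 (D1 v) + l0 (D2 v)) := by
  unfold pottsE
  rw [map_smul D1, map_smul D2, l0_smul ht, l0_smul ht]
  congr 2
  refine Finset.sum_congr rfl fun i _ => ?_
  rw [map_smul A]
  simp [Pi.smul_apply, smul_eq_mul]

lemma pottsE_nonneg {ng d m : ℕ}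
    (A : (Fin ng → Fin d → ℝ) →ₗ[ℝ] (Fin m → ℝ)) (b : Fin m → ℝ)
    (D1 D2 : (Fin ng → Fin d → ℝ) →ₗ[ℝ] (Fin ng → Fin d → ℝ))
    {p lam : ℝ} (hp : 0 < p) (hlam : 0 ≤ lam) (v : Fin ng → Fin d → ℝ) :
    0 ≤ pottsE A b D1 D2 p lam v := by
  unfold pottsE
  have h1 : (0:ℝ) ≤ (1/p) * ∑ i, |A v i - b i| ^ p := by
    apply mul_nonneg (by positivity)
    exact Finset.sum_nonneg fun i _ => Real.rpow_nonneg (abs_nonneg _) _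
  have h2 : (0:ℝ) ≤ lam * (l0 (D1 v) + l0 (D2 v)) :=
    mul_nonneg hlam (add_nonneg (l0_nonneg _) (l0_nonneg _))
  linarith

/-- Asymptotic (recession) function: E_∞(u) = liminf_{u'→u, t→∞} E(tu')/t. -/
noncomputable def pottsEinf {ng d m : ℕ}
    (A : (Fin ng → Fin d → ℝ) →ₗ[ℝ] (Fin m → ℝ)) (b : Fin m → ℝ)
    (D1 D2 : (Fin ng → Fin d → ℝ) →ₗ[ℝ] (Fin ng → Fin d → ℝ))
    (p lam : ℝ) (u : Fin ng → Fin d → ℝ) : EReal :=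
  Filter.liminf
    (fun x : (Fin ng → Fin d → ℝ) × ℝ =>
      ((pottsE A b D1 D2 p lam (x.2 • x.1) / x.2 : ℝ) : EReal))
    ((nhds u) ×ˢ atTop)

lemma part1 {ng d m : ℕ}
    (A : (Fin ng → Fin d → ℝ) →ₗ[ℝ] (Fin m → ℝ)) (b : Fin m → ℝ)
    (D1 D2 : (Fin ng → Fin d → ℝ) →ₗ[ℝ] (Fin ng → Fin d → ℝ))
    (p lam : ℝ) (hp : 1 ≤ p) (hlam : 0 < lam) (u : Fin ng → Fin d → ℝ)
    (hu : A u = 0) : pottsEinf A b D1 D2 p lam u = 0 := by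
  have hp0 : (0:ℝ) < p := lt_of_lt_of_le one_pos hp
  set f : (Fin ng → Fin d → ℝ) × ℝ → EReal := fun x =>
    ((pottsE A b D1 D2 p lam (x.2 • x.1) / x.2 : ℝ) : EReal) with hf
  -- lower bound
  have hlow : (0 : EReal) ≤ liminf f ((nhds u) ×ˢ atTop) := by
    refine le_liminf_of_le (by isBoundedDefault) ?_
    have ev : ∀ᶠ x : (Fin ng → Fin d → ℝ) × ℝ in (nhds u) ×ˢ atTop, (0:ℝ) < x.2 :=
      (eventually_gt_atTop 0).prod_inr _
    filter_upwards [ev] with x hx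
    exact EReal.coe_nonneg.2 (div_nonneg (pottsE_nonneg A b D1 D2 hp0 hlam.le _) hx.le)
  -- upper bound
  set C0 : ℝ := (1/p) * ∑ i, |b i| ^ p + lam * (l0 (D1 u) + l0 (D2 u)) with hC0
  have hkey : ∀ x : (Fin ng → Fin d → ℝ) × ℝ, x.1 = u → (0:ℝ) < x.2 →
      f x = ((C0 / x.2 : ℝ) : EReal) := by
    intro x hx1 hx2
    simp only [hf, hx1]
    congr 1
    rw [pottsE_smul A b D1 D2 p lam (ne_of_gt hx2)]
    congr 3
    refine Finset.sum_congr rfl fun i _ => ?_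
    rw [hu]
    simp
  have hpt : Tendsto f ((pure u) ×ˢ atTop) (𝓝 (0:EReal)) := by
    have h2 : Tendsto (fun x : (Fin ng → Fin d → ℝ) × ℝ => ((C0 / x.2 : ℝ) : EReal))
        ((pure u) ×ˢ atTop) (𝓝 (0:EReal)) := by
      rw [show ((0:EReal)) = ((0:ℝ):EReal) by simp]
      exact EReal.tendsto_coe.2 (tendsto_const_nhds.div_atTop tendsto_snd)
    refine h2.congr' ?_
    have e1 : ∀ᶠ x : (Fin ng → Fin d → ℝ) × ℝ in (pure u) ×ˢ atTop, x.1 = u :=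
      Eventually.prod_inl (show ∀ᶠ y in pure u, y = u from eventually_pure.2 rfl) _
    have e2 : ∀ᶠ x : (Fin ng → Fin d → ℝ) × ℝ in (pure u) ×ˢ atTop, (0:ℝ) < x.2 :=
      (eventually_gt_atTop 0).prod_inr _
    filter_upwards [e1, e2] with x hx1 hx2
    exact (hkey x hx1 hx2).symm
  have hup : liminf f ((nhds u) ×ˢ atTop) ≤ 0 := by
    have := liminf_le_liminf_of_le (g := (pure u) ×ˢ atTop)
      (f := (nhds u) ×ˢ atTop) (u := f) (prod_mono (pure_le_nhds u) le_rfl)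
    rw [hpt.liminf_eq] at this
    exact this
  exact le_antisymm hup hlow

lemma part2 {ng d m : ℕ}
    (A : (Fin ng → Fin d → ℝ) →ₗ[ℝ] (Fin m → ℝ)) (b : Fin m → ℝ)
    (D1 D2 : (Fin ng → Fin d → ℝ) →ₗ[ℝ] (Fin ng → Fin d → ℝ))
    (p lam : ℝ) (hlam : 0 < lam) (u : Fin ng → Fin d → ℝ)
    (hu : A u ≠ 0) (hp1 : 1 < p) : pottsEinf A b D1 D2 p lam u = ⊤ := by
  have hp0 : (0:ℝ) < p := lt_trans one_pos hp1
  obtain ⟨i0, hi0⟩ : ∃ i, A u i ≠ 0 := by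
    by_contra h; push_neg at h; exact hu (funext h)
  set c : ℝ := |A u i0| with hc
  have hc0 : 0 < c := abs_pos.2 hi0
  have hA : Continuous fun v : Fin ng → Fin d → ℝ => A v i0 :=
    (continuous_apply i0).comp A.continuous_of_finiteDimensional
  have ev1 : ∀ᶠ x : (Fin ng → Fin d → ℝ) × ℝ in (nhds u) ×ˢ atTop, c/2 < |A x.1 i0| :=
    Eventually.prod_inl (((hA.tendsto u).abs).eventually
      (eventually_gt_nhds (half_lt_self hc0))) _
  have ev2 : ∀ᶠ x : (Fin ng → Fin d → ℝ) × ℝ in (nhds u) ×ˢ atTop,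
      max 1 (4*|b i0|/c) ≤ x.2 := (eventually_ge_atTop _).prod_inr _
  set g : ℝ → ℝ := fun t => (1/p) * ((c/4)^p) * t^(p-1) with hgdef
  have hg : Tendsto g atTop atTop :=
    Tendsto.const_mul_atTop (by positivity) (tendsto_rpow_atTop (by linarith))
  have hge : ∀ᶠ x : (Fin ng → Fin d → ℝ) × ℝ in (nhds u) ×ˢ atTop,
      g x.2 ≤ pottsE A b D1 D2 p lam (x.2 • x.1) / x.2 := by
    filter_upwards [ev1, ev2] with x h1 h2
    have ht1 : (1:ℝ) ≤ x.2 := le_trans (le_max_left _ _) h2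
    have ht0 : (0:ℝ) < x.2 := lt_of_lt_of_le one_pos ht1
    have ht2 : 4*|b i0| ≤ x.2 * c := by
      have := le_trans (le_max_right 1 (4*|b i0|/c)) h2
      rwa [div_le_iff₀ hc0] at this
    have habs : x.2 * (c/4) ≤ |x.2 * A x.1 i0 - b i0| := by
      have h3 := abs_sub_abs_le_abs_sub (x.2 * A x.1 i0) (b i0)
      rw [abs_mul, abs_of_pos ht0] at h3
      nlinarith [mul_le_mul_of_nonneg_left h1.le ht0.le, abs_nonneg (b i0)]
    have hrp : (x.2 * (c/4))^p ≤ |x.2 * A x.1 i0 - b i0|^p :=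
      Real.rpow_le_rpow (by positivity) habs hp0.le
    have hsum : |x.2 * A x.1 i0 - b i0|^p ≤ ∑ i, |x.2 * A x.1 i - b i|^p :=
      Finset.single_le_sum (f := fun i => |x.2 * A x.1 i - b i|^p)
        (fun i _ => Real.rpow_nonneg (abs_nonneg _) _) (Finset.mem_univ i0)
    have hE : (1/p) * (x.2 * (c/4))^p ≤ pottsE A b D1 D2 p lam (x.2 • x.1) := by
      rw [pottsE_smul A b D1 D2 p lam (ne_of_gt ht0)]
      have hl0 : (0:ℝ) ≤ lam * (l0 (D1 x.1) + l0 (D2 x.1)) :=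
        mul_nonneg hlam.le (add_nonneg (l0_nonneg _) (l0_nonneg _))
      have := mul_le_mul_of_nonneg_left (le_trans hrp hsum) (by positivity : (0:ℝ) ≤ 1/p)
      linarith
    have heq : g x.2 = (1/p) * (x.2 * (c/4))^p / x.2 := by
      rw [Real.mul_rpow ht0.le (by positivity)]
      have htp : x.2 ^ (p-1) = x.2^p / x.2 := by
        rw [Real.rpow_sub ht0, Real.rpow_one]
      rw [hgdef]
      simp only []
      rw [htp]
      ring
    rw [heq]
    gcongr
  have freal : Tendsto (fun x : (Fin ng → Fin d → ℝ) × ℝ =>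
      pottsE A b D1 D2 p lam (x.2 • x.1) / x.2) ((nhds u) ×ˢ atTop) atTop :=
    tendsto_atTop_mono' _ hge (hg.comp tendsto_snd)
  have htop : Tendsto (fun x : (Fin ng → Fin d → ℝ) × ℝ =>
      ((pottsE A b D1 D2 p lam (x.2 • x.1) / x.2 : ℝ) : EReal))
      ((nhds u) ×ˢ atTop) (𝓝 ⊤) := by
    rw [EReal.tendsto_nhds_top_iff_real]
    intro M
    filter_upwards [freal.eventually (eventually_gt_atTop M)] with x hx
    exact EReal.coe_lt_coe_iff.2 hx
  exact htop.liminf_eq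

lemma part3 {ng d m : ℕ}
    (A : (Fin ng → Fin d → ℝ) →ₗ[ℝ] (Fin m → ℝ)) (b : Fin m → ℝ)
    (D1 D2 : (Fin ng → Fin d → ℝ) →ₗ[ℝ] (Fin ng → Fin d → ℝ))
    (lam : ℝ) (hlam : 0 < lam) (u : Fin ng → Fin d → ℝ) :
    pottsEinf A b D1 D2 1 lam u = ((∑ i, |A u i| : ℝ) : EReal) := by
  set S : ℝ := ∑ i, |A u i| with hS
  set f : (Fin ng → Fin d → ℝ) × ℝ → EReal := fun x =>
    ((pottsE A b D1 D2 1 lam (x.2 • x.1) / x.2 : ℝ) : EReal) with hf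
  have hAc : ∀ i : Fin m, Continuous fun v : Fin ng → Fin d → ℝ => A v i := fun i =>
    (continuous_apply i).comp A.continuous_of_finiteDimensional
  -- key formula for t ≠ 0
  have hform : ∀ (v : Fin ng → Fin d → ℝ) (t : ℝ), 0 < t →
      pottsE A b D1 D2 1 lam (t • v) / t
        = (∑ i, |t * A v i - b i|) / t
          + lam * (l0 (D1 v) + l0 (D2 v)) / t := by
    intro v t ht
    rw [pottsE_smul A b D1 D2 1 lam (ne_of_gt ht), add_div]
    congr 1
    simp [Real.rpow_one]
  -- lower bound
  have hlow : (S : EReal) ≤ liminf f ((nhds u) ×ˢ atTop) := by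
    set h : (Fin ng → Fin d → ℝ) × ℝ → ℝ := fun x =>
      (∑ i, |A x.1 i|) - (∑ i, |b i|) / x.2 with hh
    have hth : Tendsto (fun x => ((h x : ℝ) : EReal)) ((nhds u) ×ˢ atTop)
        (𝓝 ((S:ℝ) : EReal)) := by
      refine EReal.tendsto_coe.2 ?_
      have h1 : Tendsto (fun x : (Fin ng → Fin d → ℝ) × ℝ => ∑ i, |A x.1 i|)
          ((nhds u) ×ˢ atTop) (𝓝 S) :=
        ((continuous_finset_sum _ fun i _ => (hAc i).abs).tendsto u).comp tendsto_fst
      have h2 : Tendsto (fun x : (Fin ng → Fin d → ℝ) × ℝ => (∑ i, |b i|) / x.2)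
          ((nhds u) ×ˢ atTop) (𝓝 0) := tendsto_const_nhds.div_atTop tendsto_snd
      simpa using h1.sub h2
    have hev : ∀ᶠ x : (Fin ng → Fin d → ℝ) × ℝ in (nhds u) ×ˢ atTop,
        ((h x : ℝ) : EReal) ≤ f x := by
      have ev : ∀ᶠ x : (Fin ng → Fin d → ℝ) × ℝ in (nhds u) ×ˢ atTop, (0:ℝ) < x.2 :=
        (eventually_gt_atTop 0).prod_inr _
      filter_upwards [ev] with x ht
      refine EReal.coe_le_coe_iff.2 ?_
      rw [hform x.1 x.2 ht]
      have hsum : x.2 * (∑ i, |A x.1 i|) - (∑ i, |b i|) ≤ ∑ i, |x.2 * A x.1 i - b i| := by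
        rw [Finset.mul_sum, ← Finset.sum_sub_distrib]
        refine Finset.sum_le_sum fun i _ => ?_
        have := abs_sub_abs_le_abs_sub (x.2 * A x.1 i) (b i)
        rw [abs_mul, abs_of_pos ht] at this
        linarith
      have hl0 : (0:ℝ) ≤ lam * (l0 (D1 x.1) + l0 (D2 x.1)) / x.2 :=
        div_nonneg (mul_nonneg hlam.le (add_nonneg (l0_nonneg _) (l0_nonneg _))) ht.le
      have heq : h x = (x.2 * (∑ i, |A x.1 i|) - (∑ i, |b i|)) / x.2 := by
        field_simp [hh]
        simp only [hh]
        rw [sub_mul, div_mul_cancel₀ _ ht.ne']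
        ring
      rw [heq]
      have : (x.2 * (∑ i, |A x.1 i|) - (∑ i, |b i|)) / x.2
          ≤ (∑ i, |x.2 * A x.1 i - b i|) / x.2 := by gcongr
      linarith
    calc (S : EReal) = liminf (fun x => ((h x : ℝ) : EReal)) ((nhds u) ×ˢ atTop) :=
          hth.liminf_eq.symm
      _ ≤ liminf f ((nhds u) ×ˢ atTop) := liminf_le_liminf hev
  -- upper bound
  have hup : liminf f ((nhds u) ×ˢ atTop) ≤ (S : EReal) := by
    set L0 : ℝ := lam * (l0 (D1 u) + l0 (D2 u)) with hL0
    set gup : ℝ → ℝ := fun t => (∑ i, |A u i - b i / t|) + L0 / t with hgup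
    have hgt : Tendsto gup atTop (𝓝 S) := by
      have h1 : Tendsto (fun t : ℝ => ∑ i, |A u i - b i / t|) atTop
          (𝓝 (∑ i, |A u i - 0|)) :=
        tendsto_finset_sum _ fun i _ =>
          (tendsto_const_nhds.sub (tendsto_const_nhds.div_atTop tendsto_id)).abs
      have h2 : Tendsto (fun t : ℝ => L0 / t) atTop (𝓝 0) :=
        tendsto_const_nhds.div_atTop tendsto_id
      simpa using h1.add h2
    have hpt : Tendsto f ((pure u) ×ˢ atTop) (𝓝 ((S:ℝ) : EReal)) := by
      have h2 : Tendsto (fun x : (Fin ng → Fin d → ℝ) × ℝ => ((gup x.2 : ℝ) : EReal))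
          ((pure u) ×ˢ atTop) (𝓝 ((S:ℝ) : EReal)) :=
        EReal.tendsto_coe.2 (hgt.comp tendsto_snd)
      refine h2.congr' ?_
      have e1 : ∀ᶠ x : (Fin ng → Fin d → ℝ) × ℝ in (pure u) ×ˢ atTop, x.1 = u :=
        Eventually.prod_inl (show ∀ᶠ y in pure u, y = u from eventually_pure.2 rfl) _
      have e2 : ∀ᶠ x : (Fin ng → Fin d → ℝ) × ℝ in (pure u) ×ˢ atTop, (0:ℝ) < x.2 :=
        (eventually_gt_atTop 0).prod_inr _
      filter_upwards [e1, e2] with x hx1 ht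
      rw [hf]
      simp only [hx1]
      norm_cast
      rw [hform u x.2 ht, hgup, hL0]
      simp only []
      congr 1
      rw [Finset.sum_div]
      refine Finset.sum_congr rfl fun i _ => ?_
      have : A u i - b i / x.2 = (x.2 * A u i - b i) / x.2 := by
        field_simp
      rw [this, abs_div, abs_of_pos ht]
    have := liminf_le_liminf_of_le (g := (pure u) ×ˢ atTop)
      (f := (nhds u) ×ˢ atTop) (u := f) (prod_mono (pure_le_nhds u) le_rfl)
    rw [hpt.liminf_eq] at this
    exact this
  exact le_antisymm hup hlow

theorem stmt0 {ng d m : ℕ}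
    (A : (Fin ng → Fin d → ℝ) →ₗ[ℝ] (Fin m → ℝ)) (b : Fin m → ℝ)
    (D1 D2 : (Fin ng → Fin d → ℝ) →ₗ[ℝ] (Fin ng → Fin d → ℝ))
    (p lam : ℝ) (hp : 1 ≤ p) (hlam : 0 < lam) (u : Fin ng → Fin d → ℝ) :
    (A u = 0 → pottsEinf A b D1 D2 p lam u = 0) ∧
    (A u ≠ 0 → 1 < p → pottsEinf A b D1 D2 p lam u = ⊤) ∧
    (A u ≠ 0 → p = 1 → pottsEinf A b D1 D2 p lam u = ((∑ i, |A u i| : ℝ) : EReal)) := by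
  refine ⟨fun hu => part1 A b D1 D2 p lam hp hlam u hu,
    fun hu hp1 => part2 A b D1 D2 p lam hlam u hu hp1,
    fun hu hpe => ?_⟩
  rw [hpe]
  exact part3 A b D1 D2 lam hlam u
end

section
/- The function E(u) = (1/p)‖Au − b‖_p^p + λ(‖∇₁u‖₀ + ‖∇₂u‖₀) on ℝ^{dn} is asymptotically level stable: for each ρ > 0, each bounded real sequence {λ_k}, and each sequence {u_k} with E(u_k) ≤ λ_k, ‖u_k‖ → ∞, and u_k/‖u_k‖ → ũ ∈ ker(E_∞), there exists k₀ such that E(u_k − ρũ) ≤ λ_k for all k ≥ k₀. -/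
open Filter Topology

lemma supp_event {ng d : ℕ}
    (D : (Fin ng → Fin d → ℝ) →ₗ[ℝ] (Fin ng → Fin d → ℝ))
    (u : ℕ → (Fin ng → Fin d → ℝ)) (utld : Fin ng → Fin d → ℝ)
    (hnorm : Tendsto (fun k => ‖u k‖) atTop atTop)
    (hdir : Tendsto (fun k => (‖u k‖)⁻¹ • u k) atTop (nhds utld)) :
    ∀ᶠ k in atTop, ∀ i, D utld i ≠ 0 → D (u k) i ≠ 0 := by
  have hD : Continuous D := D.continuous_of_finiteDimensional
  have hpos : ∀ᶠ k in atTop, 0 < ‖u k‖ := hnorm.eventually_gt_atTop 0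
  rw [eventually_all]
  intro i
  by_cases h0 : D utld i = 0
  · filter_upwards with k h; exact absurd h0 h
  · have ht : Tendsto (fun k => D ((‖u k‖)⁻¹ • u k) i) atTop (nhds (D utld i)) :=
      (((continuous_apply i).comp hD).continuousAt.tendsto).comp hdir
    have hne : ∀ᶠ k in atTop, D ((‖u k‖)⁻¹ • u k) i ≠ 0 := ht.eventually_ne h0
    filter_upwards [hne, hpos] with k hk hkpos _ hcon
    apply hk
    rw [map_smul]
    simp [hcon]

/-- E is asymptotically level stable (als). -/
theorem stmt4 {ng d m : ℕ}
    (A : (Fin ng → Fin d → ℝ) →ₗ[ℝ] (Fin m → ℝ)) (b : Fin m → ℝ)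
    (D1 D2 : (Fin ng → Fin d → ℝ) →ₗ[ℝ] (Fin ng → Fin d → ℝ))
    (p lam : ℝ) (hp : 1 ≤ p) (hlam : 0 < lam)
    (ρ : ℝ) (hρ : 0 < ρ)
    (lamseq : ℕ → ℝ) (hbdd : ∃ B : ℝ, ∀ k, |lamseq k| ≤ B)
    (u : ℕ → (Fin ng → Fin d → ℝ)) (utld : Fin ng → Fin d → ℝ)
    (hlev : ∀ k, pottsE A b D1 D2 p lam (u k) ≤ lamseq k)
    (hnorm : Tendsto (fun k => ‖u k‖) atTop atTop)
    (hdir : Tendsto (fun k => (‖u k‖)⁻¹ • u k) atTop (nhds utld))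
    (hker : A utld = 0) :
    ∃ k₀ : ℕ, ∀ k ≥ k₀, pottsE A b D1 D2 p lam (u k - ρ • utld) ≤ lamseq k := by
  have h1 := supp_event D1 u utld hnorm hdir
  have h2 := supp_event D2 u utld hnorm hdir
  have key : ∀ᶠ k in atTop,
      pottsE A b D1 D2 p lam (u k - ρ • utld) ≤ pottsE A b D1 D2 p lam (u k) := by
    filter_upwards [h1, h2] with k hk1 hk2
    have hA : A (u k - ρ • utld) = A (u k) := by
      rw [map_sub, map_smul, hker, smul_zero, sub_zero]
    have hl : ∀ (D : (Fin ng → Fin d → ℝ) →ₗ[ℝ] (Fin ng → Fin d → ℝ)),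
        (∀ i, D utld i ≠ 0 → D (u k) i ≠ 0) →
        l0 (D (u k - ρ • utld)) ≤ l0 (D (u k)) := by
      intro D hkD
      unfold l0
      have hsub : {i : Fin ng | D (u k - ρ • utld) i ≠ 0} ⊆ {i | D (u k) i ≠ 0} := by
        intro i hi
        simp only [Set.mem_setOf_eq] at hi ⊢
        by_cases h0 : D utld i = 0
        · rw [map_sub, map_smul] at hi
          simpa [h0] using hi
        · exact hkD i h0
      exact_mod_cast Set.ncard_le_ncard hsub (Set.toFinite _)
    have hl1 := hl D1 hk1
    have hl2 := hl D2 hk2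
    unfold pottsE
    rw [hA]
    have := add_le_add hl1 hl2
    nlinarith [hlam.le]
  obtain ⟨k₀, hk₀⟩ := eventually_atTop.1 key
  exact ⟨k₀, fun k hk => (hk₀ k hk).trans (hlev k)⟩
end

section
/- The (generally non-coercive, discontinuous) function E(u) = (1/p)‖Au − b‖_p^p + λ(‖∇₁u‖₀ + ‖∇₂u‖₀) on ℝ^{dn}, with p ≥ 1, λ > 0, attains a global minimum, i.e., there exists û ∈ ℝ^{dn} with E(û) ≤ E(u) for all u. -/
open Filter Topology

/-- The p-power fidelity attains its minimum on any submodule of a finite-dimensional space. -/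
lemma exists_min_fid {m : ℕ} (b : Fin m → ℝ) (p : ℝ) (hp : 1 ≤ p)
    (W : Submodule ℝ (Fin m → ℝ)) :
    ∃ y ∈ W, ∀ z ∈ W, ∑ i, |y i - b i| ^ p ≤ ∑ i, |z i - b i| ^ p := by
  have hp0 : (0:ℝ) < p := lt_of_lt_of_le one_pos hp
  set g : (Fin m → ℝ) → ℝ := fun z => ∑ i, |z i - b i| ^ p with hg
  have hgc : Continuous g := by
    apply continuous_finset_sum
    intro i _
    exact (Real.continuous_rpow_const hp0.le).comp
      (((continuous_apply i).sub continuous_const).abs)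
  have hgnonneg : ∀ (z : Fin m → ℝ) (i : Fin m), 0 ≤ |z i - b i| ^ p := fun z i =>
    Real.rpow_nonneg (abs_nonneg _) _
  set c : ℝ := g 0 with hc
  have hc0 : 0 ≤ c := Finset.sum_nonneg fun i _ => hgnonneg 0 i
  set K : Set (Fin m → ℝ) := {y | y ∈ W ∧ g y ≤ c} with hK
  have hKclosed : IsClosed K := by
    exact (Submodule.closed_of_finiteDimensional W).inter (isClosed_le hgc continuous_const)
  have hKbdd : Bornology.IsBounded K := by
    rw [isBounded_iff_forall_norm_le]
    refine ⟨‖b‖ + c ^ (1/p), fun y hy => ?_⟩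
    have hbnd : ∀ i, ‖y i‖ ≤ ‖b‖ + c ^ (1/p) := by
      intro i
      have h1 : |y i - b i| ^ p ≤ c :=
        le_trans (Finset.single_le_sum (fun j _ => hgnonneg y j) (Finset.mem_univ i)) hy.2
      have h2 : |y i - b i| ≤ c ^ (1/p) := by
        have := Real.rpow_le_rpow (Real.rpow_nonneg (abs_nonneg _) _) h1
          (le_of_lt (by positivity : (0:ℝ) < 1/p))
        rwa [← Real.rpow_mul (abs_nonneg _),
          show p * (1/p) = 1 by field_simp, Real.rpow_one] at this
      calc ‖y i‖ = |y i| := rfl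
        _ ≤ |b i| + |y i - b i| := by
            have := abs_sub_abs_le_abs_sub (y i) (b i); linarith [abs_sub_comm (y i) (b i)]
        _ ≤ ‖b‖ + c ^ (1/p) := by
            refine add_le_add ?_ h2
            exact norm_le_pi_norm b i
    exact pi_norm_le_iff_of_nonneg (by positivity) |>.mpr hbnd
  have hKne : K.Nonempty := ⟨0, ⟨W.zero_mem, le_refl c⟩⟩
  have hKcompact : IsCompact K := Metric.isCompact_of_isClosed_isBounded hKclosed hKbdd
  obtain ⟨y, hyK, hymin⟩ := hKcompact.exists_isMinOn hKne hgc.continuousOn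
  refine ⟨y, hyK.1, fun z hz => ?_⟩
  have hmin' := isMinOn_iff.mp hymin
  by_cases hzc : g z ≤ c
  · exact hmin' z ⟨hz, hzc⟩
  · exact le_trans (hmin' 0 ⟨W.zero_mem, le_refl c⟩) (le_of_not_ge hzc)

/-- E attains a global minimum. -/
theorem stmt5 {ng d m : ℕ}
    (A : (Fin ng → Fin d → ℝ) →ₗ[ℝ] (Fin m → ℝ)) (b : Fin m → ℝ)
    (D1 D2 : (Fin ng → Fin d → ℝ) →ₗ[ℝ] (Fin ng → Fin d → ℝ))
    (p lam : ℝ) (hp : 1 ≤ p) (hlam : 0 < lam) :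
    ∃ uh : Fin ng → Fin d → ℝ, ∀ u, pottsE A b D1 D2 p lam uh ≤ pottsE A b D1 D2 p lam u := by
  have hp0 : (0:ℝ) < p := lt_of_lt_of_le one_pos hp
  set g : (Fin m → ℝ) → ℝ := fun z => ∑ i, |z i - b i| ^ p with hg
  -- the subspace of vectors whose gradients are supported in a given pair of sets
  set V : Finset (Fin ng) × Finset (Fin ng) → Submodule ℝ (Fin ng → Fin d → ℝ) :=
    fun s =>
      { carrier := {u | (∀ i ∉ s.1, D1 u i = 0) ∧ ∀ i ∉ s.2, D2 u i = 0}
        add_mem' := by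
          intro a b ha hb
          refine ⟨fun i hi => ?_, fun i hi => ?_⟩
          · simp [map_add, ha.1 i hi, hb.1 i hi]
          · simp [map_add, ha.2 i hi, hb.2 i hi]
        zero_mem' := by simp
        smul_mem' := by
          intro r a ha
          refine ⟨fun i hi => ?_, fun i hi => ?_⟩
          · simp [map_smul, ha.1 i hi]
          · simp [map_smul, ha.2 i hi] } with hV
  -- for each support pattern, a minimizer of the fidelity over V s
  have key : ∀ s : Finset (Fin ng) × Finset (Fin ng),
      ∃ u, u ∈ V s ∧ ∀ v ∈ V s, g (A u) ≤ g (A v) := by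
    intro s
    obtain ⟨y, hyW, hmin⟩ := exists_min_fid b p hp ((V s).map A)
    obtain ⟨u, huV, hAu⟩ := Submodule.mem_map.mp hyW
    exact ⟨u, huV, fun v hv => by
      rw [← hAu] at hmin
      exact hmin (A v) (Submodule.mem_map_of_mem hv)⟩
  choose U hUV hUmin using key
  set val : Finset (Fin ng) × Finset (Fin ng) → ℝ :=
    fun s => (1/p) * g (A (U s)) + lam * ((s.1.card : ℝ) + (s.2.card : ℝ)) with hval
  obtain ⟨s0, _, hs0⟩ := Finset.exists_min_image Finset.univ val ⟨(∅, ∅), Finset.mem_univ _⟩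
  refine ⟨U s0, fun u => ?_⟩
  -- support pattern of u
  set t : Finset (Fin ng) × Finset (Fin ng) :=
    (Finset.univ.filter (fun i => D1 u i ≠ 0), Finset.univ.filter (fun i => D2 u i ≠ 0)) with ht
  have hut : u ∈ V t := by
    constructor
    · intro i hi; by_contra h; exact hi (Finset.mem_filter.mpr ⟨Finset.mem_univ _, h⟩)
    · intro i hi; by_contra h; exact hi (Finset.mem_filter.mpr ⟨Finset.mem_univ _, h⟩)
  -- l0 of gradients of u equals the cards of t
  have hl0 : ∀ (w : Fin ng → Fin d → ℝ),
      l0 w = (Finset.univ.filter (fun i => w i ≠ 0)).card := by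
    intro w
    have : {i : Fin ng | w i ≠ 0} = ↑(Finset.univ.filter (fun i => w i ≠ 0)) := by
      ext i; simp
    rw [l0, this, Set.ncard_coe_finset]
  -- l0 bounds for gradients of minimizers
  have hl0le : ∀ s : Finset (Fin ng) × Finset (Fin ng),
      l0 (D1 (U s)) + l0 (D2 (U s)) ≤ (s.1.card : ℝ) + (s.2.card : ℝ) := by
    intro s
    have h1 : {i : Fin ng | D1 (U s) i ≠ 0} ⊆ ↑s.1 := by
      intro i hi; by_contra h; exact hi ((hUV s).1 i h)
    have h2 : {i : Fin ng | D2 (U s) i ≠ 0} ⊆ ↑s.2 := by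
      intro i hi; by_contra h; exact hi ((hUV s).2 i h)
    have c1 : l0 (D1 (U s)) ≤ (s.1.card : ℝ) := by
      rw [l0]
      exact_mod_cast Nat.cast_le.mpr
        (by simpa [Set.ncard_coe_finset] using Set.ncard_le_ncard h1 s.1.finite_toSet :
          {i : Fin ng | D1 (U s) i ≠ 0}.ncard ≤ s.1.card)
    have c2 : l0 (D2 (U s)) ≤ (s.2.card : ℝ) := by
      rw [l0]
      exact_mod_cast Nat.cast_le.mpr
        (by simpa [Set.ncard_coe_finset] using Set.ncard_le_ncard h2 s.2.finite_toSet :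
          {i : Fin ng | D2 (U s) i ≠ 0}.ncard ≤ s.2.card)
    linarith
  have step1 : pottsE A b D1 D2 p lam (U s0) ≤ val s0 := by
    rw [pottsE]
    have := hl0le s0
    have hfid : (1/p) * ∑ i, |A (U s0) i - b i| ^ p = (1/p) * g (A (U s0)) := rfl
    rw [hfid]
    have := mul_le_mul_of_nonneg_left (hl0le s0) hlam.le
    linarith
  have step2 : val s0 ≤ val t := hs0 t (Finset.mem_univ _)
  have step3 : val t ≤ pottsE A b D1 D2 p lam u := by
    rw [pottsE]
    have hfid : g (A (U t)) ≤ g (A u) := hUmin t u hut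
    have hfid' : (1/p) * g (A (U t)) ≤ (1/p) * ∑ i, |A u i - b i| ^ p := by
      have : (1/p) * g (A (U t)) ≤ (1/p) * g (A u) :=
        mul_le_mul_of_nonneg_left hfid (by positivity)
      exact this
    have hcard : (t.1.card : ℝ) + (t.2.card : ℝ) = l0 (D1 u) + l0 (D2 u) := by
      rw [hl0 (D1 u), hl0 (D2 u)]
    rw [hval]
    simp only
    rw [hcard]
    linarith
  linarith
end

section
/- Suppose a real sequence a_k ≥ 0 satisfies a_{k+1} ≤ C/(2η^{(k)}) · a_{k+1} + C/(2η^{(k)}) + (1/2)b_k + a_k for all k, where η^{(k)} = η^{(0)}σ^k → ∞ and b_k decays exponentially. Then there exist constants C' > 0 and τ with 1 < τ ≤ √σ such that a_k ≤ C'τ^k for all k. -/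
set_option maxHeartbeats 1000000


open Filter Topology

/-- Abstract growth-estimate lemma used to bound ‖u^{(k)}‖₂ in the ADMM convergence proof. -/
theorem stmt15 (a b : ℕ → ℝ) (C η₀ σ : ℝ) (η : ℕ → ℝ)
    (ha : ∀ k, 0 ≤ a k) (hC : 0 < C) (hη₀ : 0 < η₀) (hσ : 1 < σ)
    (hη : ∀ k, η k = η₀ * σ ^ k)
    (hb : ∃ B r : ℝ, 0 < B ∧ 0 < r ∧ r < 1 ∧ ∀ k, b k ≤ B * r ^ k)
    (hrec : ∀ k, a (k + 1) ≤ C / (2 * η k) * a (k + 1) + C / (2 * η k) + b k / 2 + a k) :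
    ∃ C' τ : ℝ, 0 < C' ∧ 1 < τ ∧ τ ≤ Real.sqrt σ ∧ ∀ k, a k ≤ C' * τ ^ k := by
  obtain ⟨B, r, hB, hr0, hr1, hbk⟩ := hb
  have hsqrt : 1 < Real.sqrt σ := by
    rw [show (1:ℝ) = Real.sqrt 1 by simp]
    exact Real.sqrt_lt_sqrt (by norm_num) hσ
  obtain ⟨τ, hτdef⟩ : ∃ t : ℝ, t = min (Real.sqrt σ) 2 := ⟨_, rfl⟩
  have hτ1 : 1 < τ := hτdef ▸ lt_min hsqrt (by norm_num)
  have hτ0 : 0 < τ := by linarith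
  have hτne : τ - 1 ≠ 0 := by intro h; linarith [sub_eq_zero.mp h]
  have hτsqrt : τ ≤ Real.sqrt σ := hτdef ▸ min_le_left _ _
  obtain ⟨δ, hδdef⟩ : ∃ d : ℝ, d = 1 - 1/τ := ⟨_, rfl⟩
  have hδ0 : 0 < δ := by
    have h1 : 1/τ < 1 := by rw [div_lt_one hτ0]; exact hτ1
    rw [hδdef]; linarith
  obtain ⟨c, hcdef⟩ : ∃ x : ℝ, x = C / (2 * η₀) := ⟨_, rfl⟩
  have hc0 : 0 < c := by rw [hcdef]; positivity
  have hσ0 : 0 < σ := by linarith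
  have hσk : ∀ k : ℕ, (0:ℝ) < σ ^ k := fun k => pow_pos hσ0 k
  have hεeq : ∀ k : ℕ, C / (2 * η k) = c / σ ^ k := by
    intro k
    rw [hη k, hcdef]
    rw [div_div]
    ring_nf
  obtain ⟨K, hK⟩ := pow_unbounded_of_one_lt (c / δ) hσ
  have hεsmall : ∀ k, K ≤ k → c / σ ^ k ≤ δ := by
    intro k hk
    have h1 : σ ^ K ≤ σ ^ k := pow_le_pow_right₀ (le_of_lt hσ) hk
    have h2 : c / δ < σ ^ k := lt_of_lt_of_le hK h1
    rw [div_le_iff₀ (hσk k)]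
    have := (div_lt_iff₀ hδ0).mp h2
    nlinarith
  obtain ⟨D, hDdef⟩ : ∃ x : ℝ, x = c + B / 2 := ⟨_, rfl⟩
  have hD0 : 0 < D := by rw [hDdef]; positivity
  obtain ⟨E, hEdef⟩ : ∃ x : ℝ, x = τ * D / (τ - 1) := ⟨_, rfl⟩
  have hE0 : 0 < E := by
    rw [hEdef]; apply div_pos (by positivity) (by linarith)
  have hEkey : τ * E - τ * D = E := by
    rw [hEdef]; field_simp; ring
  -- key step inequality for k ≥ K
  have hstep : ∀ k, K ≤ k → a (k + 1) ≤ τ * (a k + D) := by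
    intro k hk
    obtain ⟨ε, hεdef⟩ : ∃ e : ℝ, e = c / σ ^ k := ⟨_, rfl⟩
    have hε : ε ≤ δ := hεdef ▸ hεsmall k hk
    have hεnn : 0 ≤ ε := hεdef ▸ le_of_lt (div_pos hc0 (hσk k))
    have hrk : b k ≤ B := by
      have := hbk k
      have hrk1 : r ^ k ≤ 1 := pow_le_one₀ (le_of_lt hr0) (le_of_lt hr1)
      nlinarith
    have hεc : c / σ ^ k ≤ c := by
      rw [div_le_iff₀ (hσk k)]
      nlinarith [one_le_pow₀ (le_of_lt hσ) (n := k), hσk k]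
    have hεc : ε ≤ c := by
      rw [hεdef, div_le_iff₀ (hσk k)]
      nlinarith [one_le_pow₀ (le_of_lt hσ) (n := k), hσk k]
    have h := hrec k
    rw [hεeq k, ← hεdef] at h
    have h2 : (1 - ε) * a (k + 1) ≤ a k + ε + b k / 2 := by nlinarith
    have h3 : τ * ε ≤ τ - 1 := by
      have h5 := mul_le_mul_of_nonneg_left hε (le_of_lt hτ0)
      have h4 : τ * δ = τ - 1 := by rw [hδdef]; field_simp
      linarith
    have ha' := ha (k + 1)
    have hR : a k + ε + b k / 2 ≤ a k + D := by
      rw [hDdef]; linarith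
    have f1 : τ * ((1 - ε) * a (k + 1)) ≤ τ * (a k + ε + b k / 2) :=
      mul_le_mul_of_nonneg_left h2 (le_of_lt hτ0)
    have f3 : τ * (a k + ε + b k / 2) ≤ τ * (a k + D) :=
      mul_le_mul_of_nonneg_left hR (le_of_lt hτ0)
    have f2 : a (k + 1) ≤ τ * ((1 - ε) * a (k + 1)) := by
      nlinarith [mul_nonneg ha' (show (0:ℝ) ≤ τ - 1 - τ * ε by linarith)]
    linarith
  -- induction: a (K + m) ≤ (a K + E) * τ ^ m - E
  have hind : ∀ m : ℕ, a (K + m) ≤ (a K + E) * τ ^ m - E := by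
    intro m
    induction m with
    | zero => simp
    | succ n ih =>
      have h1 : a (K + n + 1) ≤ τ * (a (K + n) + D) := hstep (K + n) (Nat.le_add_right K n)
      have h2 : τ * (a (K + n) + D) ≤ τ * ((a K + E) * τ ^ n - E + D) := by
        apply mul_le_mul_of_nonneg_left _ (le_of_lt hτ0)
        linarith
      have h3 : τ * ((a K + E) * τ ^ n - E + D) = (a K + E) * τ ^ (n + 1) - (τ * E - τ * D) := by
        ring
      have h6 : a (K + (n + 1)) ≤ (a K + E) * τ ^ (n + 1) - (τ * E - τ * D) := by
        rw [show K + (n + 1) = K + n + 1 by ring]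
        calc a (K + n + 1) ≤ τ * (a (K + n) + D) := h1
          _ ≤ τ * ((a K + E) * τ ^ n - E + D) := h2
          _ = (a K + E) * τ ^ (n + 1) - (τ * E - τ * D) := h3
      rw [hEkey] at h6
      exact h6
  -- final constant
  obtain ⟨S, hSdef⟩ : ∃ s : ℝ, s = ∑ j ∈ Finset.range (K + 1), a j := ⟨_, rfl⟩
  have hS0 : 0 ≤ S := hSdef ▸ Finset.sum_nonneg fun j _ => ha j
  have hSle : ∀ j, j ≤ K → a j ≤ S := by
    intro j hj
    rw [hSdef]
    exact Finset.single_le_sum (fun i _ => ha i) (Finset.mem_range.mpr (Nat.lt_succ_of_le hj))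
  refine ⟨S + E + 1, τ, by positivity, hτ1, hτsqrt, ?_⟩
  intro k
  have hτk : (1:ℝ) ≤ τ ^ k := one_le_pow₀ (le_of_lt hτ1)
  rcases le_or_gt k K with hkK | hkK
  · have h1 : a k ≤ S := hSle k hkK
    have h2 : S + E + 1 ≤ (S + E + 1) * τ ^ k :=
      le_mul_of_one_le_right (by positivity) hτk
    linarith
  · obtain ⟨m, rfl⟩ : ∃ m, k = K + m := ⟨k - K, by omega⟩
    have h1 := hind m
    have h2 : τ ^ m ≤ τ ^ (K + m) := pow_le_pow_right₀ (le_of_lt hτ1) (Nat.le_add_left m K)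
    have h3 : a K ≤ S := hSle K le_rfl
    have h4 : (0:ℝ) ≤ a K + E := by linarith [ha K]
    have h5 : (a K + E) * τ ^ m ≤ (a K + E) * τ ^ (K + m) := mul_le_mul_of_nonneg_left h2 h4
    have h6 : (a K + E) * τ ^ (K + m) ≤ (S + E + 1) * τ ^ (K + m) :=
      mul_le_mul_of_nonneg_right (by linarith) (le_of_lt (pow_pos hτ0 (K + m)))
    linarith
end
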